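/- (Lemma 1, generalized stacking) Fix d ≥ 1 and an onsite symmetry (G, u), and let Ω be a flow (satisfying flow properties (1)–(4)). Let Λ be a finite type of sites, let Λ₁, Λ₂ ⊆ Λ be disjoint subsets, let U₁, U₂ be G-symmetric unitaries on Λ supported on Λ₁ and Λ₂ respectively, and let A₁, B₁ ⊆ Λ₁ and A₂, B₂ ⊆ Λ₂. Then Ω^Λ_{A₁∪A₂, B₁∪B₂}(U₁·U₂) = Ω^Λ_{A₁,B₁}(U₁) + Ω^Λ_{A₂,B₂}(U₂). -/
import Mathlib


open Matrix

/-- A matrix on the many-body space `ι = Λ → Fin d` is supported on `S ⊆ Λ` if its entries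
vanish whenever the two configurations differ at a site outside `S`, and otherwise depend
only on the restrictions of the configurations to `S`. -/
def SupportedOn {Λ : Type*} {d : ℕ} (S : Set Λ)
    (M : Matrix (Λ → Fin d) (Λ → Fin d) ℂ) : Prop :=
  (∀ x y, (∃ r ∉ S, x r ≠ y r) → M x y = 0) ∧
  (∀ x y x' y', (∀ r ∈ S, x r = x' r) → (∀ r ∈ S, y r = y' r) →
    (∀ r ∉ S, x r = y r) → (∀ r ∉ S, x' r = y' r) → M x y = M x' y')

/-- A matrix is unitary if `Mᴴ M = 1 = M Mᴴ`. -/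
def IsUnitaryMat {ι : Type*} [Fintype ι] [DecidableEq ι] (M : Matrix ι ι ℂ) : Prop :=
  Mᴴ * M = 1 ∧ M * Mᴴ = 1

/-- The global onsite symmetry operator `U_g`, with entries `∏_r u(g)_{x(r),y(r)}`. -/
def symOp {Λ : Type*} [Fintype Λ] {d : ℕ} {G : Type*}
    (u : G → Matrix (Fin d) (Fin d) ℂ) (g : G) :
    Matrix (Λ → Fin d) (Λ → Fin d) ℂ :=
  Matrix.of fun x y => ∏ r, u g (x r) (y r)

/-- A matrix is `G`-symmetric if it commutes with every global symmetry operator. -/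
def IsGSymm {Λ : Type*} [Fintype Λ] [DecidableEq Λ] {d : ℕ} {G : Type*}
    (u : G → Matrix (Fin d) (Fin d) ℂ)
    (M : Matrix (Λ → Fin d) (Λ → Fin d) ℂ) : Prop :=
  ∀ g, M * symOp u g = symOp u g * M

/-- The `ℓ`-thickened boundary `∂_ℓ S = {r : dist(r,S) ≤ ℓ and dist(r,Λ∖S) ≤ ℓ}`. -/
def thickBd {Λ : Type*} [MetricSpace Λ] (ℓ : ℝ) (S : Set Λ) : Set Λ :=
  {r | (∃ s ∈ S, dist r s ≤ ℓ) ∧ (∃ s ∈ Sᶜ, dist r s ≤ ℓ)}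

/-- A strict locality-preserving unitary with operator spreading length `ξ`: conjugation
maps any operator supported on a single site `r` to one supported in the closed ball of
radius `ξ` around `r`. -/
def IsStrictLPU {Λ : Type*} [Fintype Λ] [DecidableEq Λ] [MetricSpace Λ] {d : ℕ}
    (ξ : ℝ) (U : Matrix (Λ → Fin d) (Λ → Fin d) ℂ) : Prop :=
  IsUnitaryMat U ∧ ∀ (r : Λ) (O : Matrix (Λ → Fin d) (Λ → Fin d) ℂ),
    SupportedOn {r} O → SupportedOn (Metric.closedBall r ξ) (Uᴴ * O * U)

/-- A flow: an assignment, to every finite lattice `Λ'`, subsets `A, B ⊆ Λ'` and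
`G`-symmetric unitary `U` on `Λ' → Fin d`, of a real number `Ω^{Λ'}_{A,B}(U)`, satisfying
the four defining properties of Definition 1. -/
structure LatticeFlow (d : ℕ) (G : Type) [Group G] (u : G → Matrix (Fin d) (Fin d) ℂ) where
  omega : (Λ' : Type) → [Fintype Λ'] → [DecidableEq Λ'] → Set Λ' → Set Λ' →
    Matrix (Λ' → Fin d) (Λ' → Fin d) ℂ → ℝ
  /-- (1): invariance under left multiplication by `G`-symmetric unitaries supported on
  `A` or on its complement. -/
  left_inv : ∀ (Λ' : Type) [Fintype Λ'] [DecidableEq Λ'] (A B : Set Λ')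
    (U V : Matrix (Λ' → Fin d) (Λ' → Fin d) ℂ),
    IsUnitaryMat U → IsGSymm u U → IsUnitaryMat V → IsGSymm u V →
    (SupportedOn A V ∨ SupportedOn Aᶜ V) →
    omega Λ' A B (V * U) = omega Λ' A B U
  /-- (2): invariance under right multiplication by `G`-symmetric unitaries supported on
  `B` or on its complement. -/
  right_inv : ∀ (Λ' : Type) [Fintype Λ'] [DecidableEq Λ'] (A B : Set Λ')
    (U V : Matrix (Λ' → Fin d) (Λ' → Fin d) ℂ),
    IsUnitaryMat U → IsGSymm u U → IsUnitaryMat V → IsGSymm u V →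
    (SupportedOn B V ∨ SupportedOn Bᶜ V) →
    omega Λ' A B (U * V) = omega Λ' A B U
  /-- (3): additivity under stacking (disjoint-union lattices and Kronecker products). -/
  stacking : ∀ (Λ₁ Λ₂ : Type) [Fintype Λ₁] [DecidableEq Λ₁] [Fintype Λ₂] [DecidableEq Λ₂]
    (A₁ B₁ : Set Λ₁) (A₂ B₂ : Set Λ₂)
    (U₁ : Matrix (Λ₁ → Fin d) (Λ₁ → Fin d) ℂ) (U₂ : Matrix (Λ₂ → Fin d) (Λ₂ → Fin d) ℂ),
    IsUnitaryMat U₁ → IsGSymm u U₁ → IsUnitaryMat U₂ → IsGSymm u U₂ →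
    omega (Λ₁ ⊕ Λ₂) (Sum.inl '' A₁ ∪ Sum.inr '' A₂) (Sum.inl '' B₁ ∪ Sum.inr '' B₂)
      (Matrix.reindex (Equiv.sumArrowEquivProdArrow Λ₁ Λ₂ (Fin d)).symm
        (Equiv.sumArrowEquivProdArrow Λ₁ Λ₂ (Fin d)).symm
        (Matrix.kroneckerMap (· * ·) U₁ U₂)) =
      omega Λ₁ A₁ B₁ U₁ + omega Λ₂ A₂ B₂ U₂
  /-- (4): normalization `Ω_{A,B}(𝟙) = 0`. -/
  norm_one : ∀ (Λ' : Type) [Fintype Λ'] [DecidableEq Λ'] (A B : Set Λ'),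
    omega Λ' A B 1 = 0

set_option linter.unusedSectionVars false
section Basics

variable {Λ : Type*} [Fintype Λ] [DecidableEq Λ] {d : ℕ} {G : Type*}
  {u : G → Matrix (Fin d) (Fin d) ℂ}

lemma SupportedOn.mono {S T : Set Λ} (hST : S ⊆ T)
    {M : Matrix (Λ → Fin d) (Λ → Fin d) ℂ} (hM : SupportedOn S M) :
    SupportedOn T M := by
  constructor
  · intro x y ⟨r, hr, hxy⟩
    exact hM.1 x y ⟨r, fun hrS => hr (hST hrS), hxy⟩
  · intro x y x' y' hx hy hout hout'
    by_cases hS : ∀ r, r ∉ S → x r = y r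
    · have hS' : ∀ r, r ∉ S → x' r = y' r := by
        intro r hrS
        by_cases hrT : r ∈ T
        · rw [← hx r hrT, ← hy r hrT]; exact hS r hrS
        · exact hout' r hrT
      exact hM.2 x y x' y' (fun r hr => hx r (hST hr)) (fun r hr => hy r (hST hr)) hS hS'
    · push_neg at hS
      obtain ⟨r, hrS, hxy⟩ := hS
      have hrT : r ∈ T := by
        by_contra hrT
        exact hxy (hout r hrT)
      have hxy' : x' r ≠ y' r := by
        rw [← hx r hrT, ← hy r hrT]; exact hxy
      rw [hM.1 x y ⟨r, hrS, hxy⟩, hM.1 x' y' ⟨r, hrS, hxy'⟩]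

lemma supportedOn_one (S : Set Λ) : SupportedOn S (1 : Matrix (Λ → Fin d) (Λ → Fin d) ℂ) := by
  constructor
  · intro x y ⟨r, _, hxy⟩
    rw [Matrix.one_apply_ne (fun h => hxy (congrFun h r))]
  · intro x y x' y' hx hy hout hout'
    have : x = y ↔ x' = y' := by
      constructor
      · intro h; funext r
        by_cases hr : r ∈ S
        · rw [← hx r hr, ← hy r hr, h]
        · exact hout' r hr
      · intro h; funext r
        by_cases hr : r ∈ S
        · rw [hx r hr, hy r hr, h]
        · exact hout r hr
    simp only [Matrix.one_apply]
    exact if_congr this rfl rfl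

end Basics
section Alg

variable {Λ : Type*} [Fintype Λ] [DecidableEq Λ] {d : ℕ} {G : Type*}
  {u : G → Matrix (Fin d) (Fin d) ℂ}

lemma SupportedOn.conjTranspose {S : Set Λ} {M : Matrix (Λ → Fin d) (Λ → Fin d) ℂ}
    (hM : SupportedOn S M) : SupportedOn S Mᴴ := by
  constructor
  · intro x y ⟨r, hr, hxy⟩
    have : M y x = 0 := hM.1 y x ⟨r, hr, fun h => hxy h.symm⟩
    simp [Matrix.conjTranspose_apply, this]
  · intro x y x' y' hx hy hout hout'
    have : M y x = M y' x' :=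
      hM.2 y x y' x' hy hx (fun r hr => (hout r hr).symm) (fun r hr => (hout' r hr).symm)
    simp [Matrix.conjTranspose_apply, this]

lemma IsUnitaryMat.mul {ι : Type*} [Fintype ι] [DecidableEq ι]
    {M N : Matrix ι ι ℂ} (hM : IsUnitaryMat M) (hN : IsUnitaryMat N) :
    IsUnitaryMat (M * N) := by
  constructor
  · rw [Matrix.conjTranspose_mul]
    calc Nᴴ * Mᴴ * (M * N) = Nᴴ * (Mᴴ * M) * N := by rw [Matrix.mul_assoc, Matrix.mul_assoc, Matrix.mul_assoc]
    _ = 1 := by rw [hM.1, Matrix.mul_one, hN.1]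
  · rw [Matrix.conjTranspose_mul]
    calc M * N * (Nᴴ * Mᴴ) = M * (N * Nᴴ) * Mᴴ := by rw [Matrix.mul_assoc, Matrix.mul_assoc, Matrix.mul_assoc]
    _ = 1 := by rw [hN.2, Matrix.mul_one, hM.2]

lemma IsUnitaryMat.conjTranspose {ι : Type*} [Fintype ι] [DecidableEq ι]
    {M : Matrix ι ι ℂ} (hM : IsUnitaryMat M) : IsUnitaryMat Mᴴ := by
  refine ⟨?_, ?_⟩ <;> rw [Matrix.conjTranspose_conjTranspose]
  exacts [hM.2, hM.1]

lemma isUnitaryMat_one {ι : Type*} [Fintype ι] [DecidableEq ι] :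
    IsUnitaryMat (1 : Matrix ι ι ℂ) := by
  constructor <;> simp

lemma IsGSymm.mul {M N : Matrix (Λ → Fin d) (Λ → Fin d) ℂ}
    (hM : IsGSymm u M) (hN : IsGSymm u N) : IsGSymm u (M * N) := by
  intro g
  rw [Matrix.mul_assoc, hN g, ← Matrix.mul_assoc, hM g, Matrix.mul_assoc]

lemma isGSymm_one : IsGSymm u (1 : Matrix (Λ → Fin d) (Λ → Fin d) ℂ) := by
  intro g; rw [Matrix.one_mul, Matrix.mul_one]

end Alg
section Perm

variable {ι : Type*} [Fintype ι] [DecidableEq ι]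

/-- The permutation matrix of an equivalence. -/
noncomputable def permM (σ : ι ≃ ι) : Matrix ι ι ℂ :=
  Matrix.of fun x y => if x = σ y then 1 else 0

lemma permM_mul (σ : ι ≃ ι) (M : Matrix ι ι ℂ) :
    permM σ * M = M.submatrix σ.symm id := by
  ext x y
  rw [Matrix.mul_apply]
  rw [Finset.sum_eq_single (σ.symm x)]
  · simp [permM]
  · intro z _ hz
    have : x ≠ σ z := fun h => hz (by simp [h])
    simp [permM, this]
  · simp

lemma mul_permM (σ : ι ≃ ι) (M : Matrix ι ι ℂ) :
    M * permM σ = M.submatrix id σ := by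
  ext x y
  rw [Matrix.mul_apply]
  rw [Finset.sum_eq_single (σ y)]
  · simp [permM]
  · intro z _ hz
    simp [permM, hz]
  · simp

lemma permM_conjTranspose (σ : ι ≃ ι) : (permM σ)ᴴ = permM σ.symm := by
  ext x y
  simp only [Matrix.conjTranspose_apply, permM, Matrix.of_apply]
  by_cases h : y = σ x
  · simp [h]
  · have h2 : x ≠ σ.symm y := fun hh => h (by simp [hh])
    simp [h, h2]

lemma permM_unitary (σ : ι ≃ ι) : IsUnitaryMat (permM σ) := by
  constructor
  · rw [permM_conjTranspose, permM_mul]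
    ext x y
    simp only [Matrix.submatrix_apply, permM, Matrix.of_apply, id_eq, Matrix.one_apply]
    simp only [Equiv.symm_symm]
    by_cases h : x = y
    · simp [h]
    · simp [h, σ.apply_eq_iff_eq]
  · rw [permM_conjTranspose, mul_permM]
    ext x y
    simp only [Matrix.submatrix_apply, permM, Matrix.of_apply, id_eq, Matrix.one_apply]
    simp

lemma permM_sandwich (σ : ι ≃ ι) (hσ : σ.symm = σ) (M : Matrix ι ι ℂ) :
    permM σ * M * permM σ = M.submatrix σ σ := by
  rw [permM_mul, mul_permM, hσ]
  rfl

end Perm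
section SitePerm

open scoped Classical

variable {Λ : Type*} [Fintype Λ] [DecidableEq Λ] {d : ℕ} {G : Type*}
  {u : G → Matrix (Fin d) (Fin d) ℂ}

/-- The configuration-space equivalence induced by a site permutation (precomposition). -/
def cfgOf {Λ' : Type*} (π : Λ' ≃ Λ') : (Λ' → Fin d) ≃ (Λ' → Fin d) where
  toFun x := x ∘ π
  invFun x := x ∘ π.symm
  left_inv x := by ext r; simp
  right_inv x := by ext r; simp

@[simp] lemma cfgOf_apply {Λ' : Type*} (π : Λ' ≃ Λ') (x : Λ' → Fin d) (r : Λ') :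
    cfgOf π x r = x (π r) := rfl

lemma cfgOf_symm {Λ' : Type*} (π : Λ' ≃ Λ') :
    (cfgOf (d := d) π).symm = cfgOf π.symm := rfl

/-- Permutation matrices of site permutations are G-symmetric. -/
lemma permM_cfgOf_gsymm (π : Λ ≃ Λ) : IsGSymm u (permM (cfgOf π)) := by
  intro g
  rw [permM_mul, mul_permM]
  ext x y
  simp only [Matrix.submatrix_apply, id_eq, symOp, Matrix.of_apply, cfgOf_symm, cfgOf_apply]
  exact Fintype.prod_equiv π.symm (fun r => u g (x (π.symm r)) (y r))
    (fun r => u g (x r) (y (π r))) (fun r => by simp)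

/-- Permutation matrices of site permutations fixing the complement of `T` are
supported on `T`. -/
lemma permM_cfgOf_supported (π : Λ ≃ Λ) (T : Set Λ) (hπ : ∀ s ∉ T, π s = s) :
    SupportedOn T (permM (cfgOf (d := d) π)) := by
  have hmem : ∀ s ∈ T, π s ∈ T := by
    intro s hs
    by_contra hmem
    have h1 : π (π s) = π s := hπ (π s) hmem
    have := π.injective h1
    rw [this] at hmem
    exact hmem hs
  have key : ∀ (x y x' y' : Λ → Fin d), (∀ r ∈ T, x r = x' r) → (∀ r ∈ T, y r = y' r) →
      (∀ r ∉ T, x' r = y' r) → x = cfgOf π y → x' = cfgOf π y' := by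
    intro x y x' y' hx hy hout' hxy
    funext r
    by_cases hr : r ∈ T
    · rw [← hx r hr]
      have : x r = y (π r) := congrFun hxy r
      rw [cfgOf_apply, this, hy (π r) (hmem r hr)]
    · rw [cfgOf_apply, hπ r hr]
      exact hout' r hr
  constructor
  · intro x y ⟨r, hr, hxy⟩
    have : x ≠ cfgOf π y := by
      intro h
      apply hxy
      have := congrFun h r
      rw [this, cfgOf_apply, hπ r hr]
    simp only [permM, Matrix.of_apply, this, if_false]
  · intro x y x' y' hx hy hout hout'
    simp only [permM, Matrix.of_apply]
    have hiff : (x = cfgOf π y) ↔ (x' = cfgOf π y') := by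
      constructor
      · exact key x y x' y' hx hy hout'
      · exact key x' y' x y (fun r hr => (hx r hr).symm) (fun r hr => (hy r hr).symm) hout
    exact if_congr hiff rfl rfl

end SitePerm
section Swap

open scoped Classical

variable {Λ : Type*} [Fintype Λ] [DecidableEq Λ] {d : ℕ}

/-- The site permutation of `Λ ⊕ Λ` swapping the two copies of each site in `R`. -/
noncomputable def sitePerm (R : Set Λ) : (Λ ⊕ Λ) ≃ (Λ ⊕ Λ) where
  toFun := Sum.elim (fun r => if r ∈ R then Sum.inr r else Sum.inl r)
    (fun r => if r ∈ R then Sum.inl r else Sum.inr r)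
  invFun := Sum.elim (fun r => if r ∈ R then Sum.inr r else Sum.inl r)
    (fun r => if r ∈ R then Sum.inl r else Sum.inr r)
  left_inv s := by rcases s with r | r <;> by_cases h : r ∈ R <;> simp [h]
  right_inv s := by rcases s with r | r <;> by_cases h : r ∈ R <;> simp [h]

@[simp] lemma sitePerm_inl (R : Set Λ) (r : Λ) :
    sitePerm R (Sum.inl r) = if r ∈ R then Sum.inr r else Sum.inl r := rfl

@[simp] lemma sitePerm_inr (R : Set Λ) (r : Λ) :
    sitePerm R (Sum.inr r) = if r ∈ R then Sum.inl r else Sum.inr r := rfl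

lemma sitePerm_symm (R : Set Λ) : (sitePerm R).symm = sitePerm R := rfl

lemma sitePerm_fix (R : Set Λ) (s : Λ ⊕ Λ)
    (hs : s ∉ (Sum.inl '' R ∪ Sum.inr '' R : Set (Λ ⊕ Λ))) : sitePerm R s = s := by
  rcases s with r | r
  · have : r ∉ R := fun h => hs (Or.inl ⟨r, h, rfl⟩)
    simp [this]
  · have : r ∉ R := fun h => hs (Or.inr ⟨r, h, rfl⟩)
    simp [this]

lemma sitePerm_comp (R R' : Set Λ) (hd : Disjoint R R') (s : Λ ⊕ Λ) :
    sitePerm R (sitePerm R' s) = sitePerm (R ∪ R') s := by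
  have hnot : ∀ r ∈ R', r ∉ R := fun r h h' => hd.ne_of_mem h' h rfl
  rcases s with r | r <;> by_cases h : r ∈ R'
  · simp [h, hnot r h]
  · by_cases h2 : r ∈ R <;> simp [h, h2]
  · simp [h, hnot r h]
  · by_cases h2 : r ∈ R <;> simp [h, h2]

lemma cfgOf_sitePerm_symm (R : Set Λ) :
    (cfgOf (d := d) (sitePerm R)).symm = cfgOf (sitePerm R) := by
  rw [cfgOf_symm, sitePerm_symm]

end Swap
section Kron

open Matrix

variable {Λ : Type*} [Fintype Λ] [DecidableEq Λ] {d : ℕ} {G : Type*}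
  {u : G → Matrix (Fin d) (Fin d) ℂ}

/-- The stacked operator on the doubled lattice. -/
noncomputable def Kr (X Y : Matrix (Λ → Fin d) (Λ → Fin d) ℂ) :
    Matrix ((Λ ⊕ Λ) → Fin d) ((Λ ⊕ Λ) → Fin d) ℂ :=
  Matrix.reindex (Equiv.sumArrowEquivProdArrow Λ Λ (Fin d)).symm
    (Equiv.sumArrowEquivProdArrow Λ Λ (Fin d)).symm
    (Matrix.kroneckerMap (· * ·) X Y)

lemma Kr_apply (X Y : Matrix (Λ → Fin d) (Λ → Fin d) ℂ) (x y : (Λ ⊕ Λ) → Fin d) :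
    Kr X Y x y = X (fun r => x (Sum.inl r)) (fun r => y (Sum.inl r)) *
      Y (fun r => x (Sum.inr r)) (fun r => y (Sum.inr r)) := by
  simp [Kr, Matrix.reindex_apply, Matrix.submatrix_apply, Equiv.sumArrowEquivProdArrow]
  rfl

lemma Kr_mul (X Y X' Y' : Matrix (Λ → Fin d) (Λ → Fin d) ℂ) :
    Kr X Y * Kr X' Y' = Kr (X * X') (Y * Y') := by
  simp only [Kr, Matrix.reindex_apply, Matrix.submatrix_mul_equiv]
  rw [← Matrix.mul_kronecker_mul]

lemma Kr_one : (Kr (1 : Matrix (Λ → Fin d) (Λ → Fin d) ℂ) 1) = 1 := by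
  have : Matrix.kroneckerMap (· * ·) (1 : Matrix (Λ → Fin d) (Λ → Fin d) ℂ)
      (1 : Matrix (Λ → Fin d) (Λ → Fin d) ℂ) =
      (1 : Matrix ((Λ → Fin d) × (Λ → Fin d)) ((Λ → Fin d) × (Λ → Fin d)) ℂ) :=
    Matrix.one_kronecker_one
  rw [Kr, this, Matrix.reindex_apply, Matrix.submatrix_one_equiv]

lemma Kr_conjTranspose (X Y : Matrix (Λ → Fin d) (Λ → Fin d) ℂ) :
    (Kr X Y)ᴴ = Kr Xᴴ Yᴴ := by
  ext x y
  simp only [Matrix.conjTranspose_apply, Kr_apply, star_mul']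

lemma Kr_unitary {X Y : Matrix (Λ → Fin d) (Λ → Fin d) ℂ}
    (hX : IsUnitaryMat X) (hY : IsUnitaryMat Y) : IsUnitaryMat (Kr X Y) := by
  constructor
  · rw [Kr_conjTranspose, Kr_mul, hX.1, hY.1, Kr_one]
  · rw [Kr_conjTranspose, Kr_mul, hX.2, hY.2, Kr_one]

lemma symOp_sum (g : G) :
    (symOp u g : Matrix ((Λ ⊕ Λ) → Fin d) ((Λ ⊕ Λ) → Fin d) ℂ) =
      Kr (symOp u g) (symOp u g) := by
  ext x y
  rw [Kr_apply]
  simp only [symOp, Matrix.of_apply]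
  exact Fintype.prod_sum_type (fun s => u g (x s) (y s))

lemma Kr_gsymm {X Y : Matrix (Λ → Fin d) (Λ → Fin d) ℂ}
    (hX : IsGSymm u X) (hY : IsGSymm u Y) : IsGSymm u (Kr X Y) := by
  intro g
  rw [symOp_sum, Kr_mul, Kr_mul, hX g, hY g]

end Kron
section SwapEntry

open Matrix

variable {Λ : Type*} [Fintype Λ] [DecidableEq Λ] {d : ℕ}

private lemma sp_inl_mem (R : Set Λ) (z : (Λ ⊕ Λ) → Fin d) {r : Λ} (hr : r ∈ R) :
    z (sitePerm R (Sum.inl r)) = z (Sum.inr r) := by rw [sitePerm_inl, if_pos hr]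

private lemma sp_inl_not (R : Set Λ) (z : (Λ ⊕ Λ) → Fin d) {r : Λ} (hr : r ∉ R) :
    z (sitePerm R (Sum.inl r)) = z (Sum.inl r) := by rw [sitePerm_inl, if_neg hr]

private lemma sp_inr_mem (R : Set Λ) (z : (Λ ⊕ Λ) → Fin d) {r : Λ} (hr : r ∈ R) :
    z (sitePerm R (Sum.inr r)) = z (Sum.inl r) := by rw [sitePerm_inr, if_pos hr]

private lemma sp_inr_not (R : Set Λ) (z : (Λ ⊕ Λ) → Fin d) {r : Λ} (hr : r ∉ R) :
    z (sitePerm R (Sum.inr r)) = z (Sum.inr r) := by rw [sitePerm_inr, if_neg hr]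

/-- Swapping the `R`-coordinates moves an operator supported on `R` from the first to the
second copy. -/
lemma swap_move {R : Set Λ} {Y : Matrix (Λ → Fin d) (Λ → Fin d) ℂ}
    (hY : SupportedOn R Y) :
    (Kr Y (1 : Matrix (Λ → Fin d) (Λ → Fin d) ℂ)).submatrix
      (cfgOf (sitePerm R)) (cfgOf (sitePerm R)) = Kr 1 Y := by
  ext x y
  rw [Matrix.submatrix_apply, Kr_apply, Kr_apply]
  change Y (fun r => x (sitePerm R (Sum.inl r))) (fun r => y (sitePerm R (Sum.inl r))) *
    (1 : Matrix (Λ → Fin d) (Λ → Fin d) ℂ) (fun r => x (sitePerm R (Sum.inr r)))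
      (fun r => y (sitePerm R (Sum.inr r))) =
    (1 : Matrix (Λ → Fin d) (Λ → Fin d) ℂ) (fun r => x (Sum.inl r)) (fun r => y (Sum.inl r)) *
      Y (fun r => x (Sum.inr r)) (fun r => y (Sum.inr r))
  by_cases hac_off : ∀ r ∉ R, x (Sum.inl r) = y (Sum.inl r)
  · by_cases hacR : ∀ r ∈ R, x (Sum.inl r) = y (Sum.inl r)
    · have hac : (fun r => x (Sum.inl r)) = fun r => y (Sum.inl r) := by
        funext r; by_cases hr : r ∈ R
        · exact hacR r hr
        · exact hac_off r hr
      by_cases hbd_off : ∀ r ∉ R, x (Sum.inr r) = y (Sum.inr r)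
      · -- main case: everything matches off the unswapped parts
        have hba : (fun r => x (sitePerm R (Sum.inr r))) =
            fun r => y (sitePerm R (Sum.inr r)) := by
          funext r; by_cases hr : r ∈ R
          · rw [sp_inr_mem R x hr, sp_inr_mem R y hr]; exact hacR r hr
          · rw [sp_inr_not R x hr, sp_inr_not R y hr]; exact hbd_off r hr
        have hYeq : Y (fun r => x (sitePerm R (Sum.inl r))) (fun r => y (sitePerm R (Sum.inl r)))
            = Y (fun r => x (Sum.inr r)) (fun r => y (Sum.inr r)) := by
          apply hY.2
          · intro r hr; exact sp_inl_mem R x hr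
          · intro r hr; exact sp_inl_mem R y hr
          · intro r hr; rw [sp_inl_not R x hr, sp_inl_not R y hr]; exact hac_off r hr
          · intro r hr; exact hbd_off r hr
        rw [hYeq, hba, Matrix.one_apply_eq, hac, Matrix.one_apply_eq, one_mul, mul_one]
      · -- x,y differ at second copy outside R : both sides vanish
        push_neg at hbd_off
        obtain ⟨r, hr, hne⟩ := hbd_off
        have h1 : (1 : Matrix (Λ → Fin d) (Λ → Fin d) ℂ)
            (fun r => x (sitePerm R (Sum.inr r))) (fun r => y (sitePerm R (Sum.inr r))) = 0 := by
          apply Matrix.one_apply_ne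
          intro h
          apply hne
          have := congrFun h r
          rwa [sp_inr_not R x hr, sp_inr_not R y hr] at this
        have h2 : Y (fun r => x (Sum.inr r)) (fun r => y (Sum.inr r)) = 0 :=
          hY.1 _ _ ⟨r, hr, hne⟩
        rw [h1, h2, mul_zero, mul_zero]
    · -- x,y differ at first copy inside R : both sides vanish
      push_neg at hacR
      obtain ⟨r, hr, hne⟩ := hacR
      have h1 : (1 : Matrix (Λ → Fin d) (Λ → Fin d) ℂ)
          (fun r => x (sitePerm R (Sum.inr r))) (fun r => y (sitePerm R (Sum.inr r))) = 0 := by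
        apply Matrix.one_apply_ne
        intro h
        apply hne
        have := congrFun h r
        rwa [sp_inr_mem R x hr, sp_inr_mem R y hr] at this
      have h2 : (1 : Matrix (Λ → Fin d) (Λ → Fin d) ℂ)
          (fun r => x (Sum.inl r)) (fun r => y (Sum.inl r)) = 0 :=
        Matrix.one_apply_ne (fun h => hne (congrFun h r))
      rw [h1, h2, mul_zero, zero_mul]
  · -- x,y differ at first copy outside R : both sides vanish
    push_neg at hac_off
    obtain ⟨r, hr, hne⟩ := hac_off
    have h1 : Y (fun r => x (sitePerm R (Sum.inl r))) (fun r => y (sitePerm R (Sum.inl r))) = 0 := by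
      apply hY.1
      refine ⟨r, hr, ?_⟩
      rwa [sp_inl_not R x hr, sp_inl_not R y hr]
    have h2 : (1 : Matrix (Λ → Fin d) (Λ → Fin d) ℂ)
        (fun r => x (Sum.inl r)) (fun r => y (Sum.inl r)) = 0 :=
      Matrix.one_apply_ne (fun h => hne (congrFun h r))
    rw [h1, h2, zero_mul, zero_mul]

/-- Swapping the `R`-coordinates fixes an operator supported on a set disjoint from `R`. -/
lemma swap_fix {R P : Set Λ} {X : Matrix (Λ → Fin d) (Λ → Fin d) ℂ}
    (hX : SupportedOn P X) (hPR : Disjoint P R) :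
    (Kr X (1 : Matrix (Λ → Fin d) (Λ → Fin d) ℂ)).submatrix
      (cfgOf (sitePerm R)) (cfgOf (sitePerm R)) = Kr X 1 := by
  have hnP : ∀ r ∈ R, r ∉ P := fun r h h' => hPR.ne_of_mem h' h rfl
  ext x y
  rw [Matrix.submatrix_apply, Kr_apply, Kr_apply]
  change X (fun r => x (sitePerm R (Sum.inl r))) (fun r => y (sitePerm R (Sum.inl r))) *
    (1 : Matrix (Λ → Fin d) (Λ → Fin d) ℂ) (fun r => x (sitePerm R (Sum.inr r)))
      (fun r => y (sitePerm R (Sum.inr r))) =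
    X (fun r => x (Sum.inl r)) (fun r => y (Sum.inl r)) *
      (1 : Matrix (Λ → Fin d) (Λ → Fin d) ℂ) (fun r => x (Sum.inr r)) (fun r => y (Sum.inr r))
  by_cases hbd_off : ∀ r ∉ R, x (Sum.inr r) = y (Sum.inr r)
  · by_cases hacR : ∀ r ∈ R, x (Sum.inl r) = y (Sum.inl r)
    · by_cases hbdR : ∀ r ∈ R, x (Sum.inr r) = y (Sum.inr r)
      · -- main case
        have hbd : (fun r => x (Sum.inr r)) = fun r => y (Sum.inr r) := by
          funext r; by_cases hr : r ∈ R
          · exact hbdR r hr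
          · exact hbd_off r hr
        have hba : (fun r => x (sitePerm R (Sum.inr r))) =
            fun r => y (sitePerm R (Sum.inr r)) := by
          funext r; by_cases hr : r ∈ R
          · rw [sp_inr_mem R x hr, sp_inr_mem R y hr]; exact hacR r hr
          · rw [sp_inr_not R x hr, sp_inr_not R y hr]; exact hbd_off r hr
        rw [hba, Matrix.one_apply_eq, hbd, Matrix.one_apply_eq, mul_one, mul_one]
        by_cases hac_offP : ∀ r ∉ P, x (Sum.inl r) = y (Sum.inl r)
        · apply hX.2
          · intro r hrP
            exact sp_inl_not R x (fun hrR => hnP r hrR hrP)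
          · intro r hrP
            exact sp_inl_not R y (fun hrR => hnP r hrR hrP)
          · intro r hrP
            by_cases hr : r ∈ R
            · rw [sp_inl_mem R x hr, sp_inl_mem R y hr]; exact hbdR r hr
            · rw [sp_inl_not R x hr, sp_inl_not R y hr]; exact hac_offP r hrP
          · exact hac_offP
        · push_neg at hac_offP
          obtain ⟨r, hrP, hne⟩ := hac_offP
          have hrR : r ∉ R := fun hrR => hne (hacR r hrR)
          have h1 : X (fun r => x (sitePerm R (Sum.inl r)))
              (fun r => y (sitePerm R (Sum.inl r))) = 0 := by
            apply hX.1
            refine ⟨r, hrP, ?_⟩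
            rwa [sp_inl_not R x hrR, sp_inl_not R y hrR]
          have h2 : X (fun r => x (Sum.inl r)) (fun r => y (Sum.inl r)) = 0 :=
            hX.1 _ _ ⟨r, hrP, hne⟩
          rw [h1, h2]
      · push_neg at hbdR
        obtain ⟨r, hr, hne⟩ := hbdR
        have h1 : X (fun r => x (sitePerm R (Sum.inl r)))
            (fun r => y (sitePerm R (Sum.inl r))) = 0 := by
          apply hX.1
          refine ⟨r, hnP r hr, ?_⟩
          rwa [sp_inl_mem R x hr, sp_inl_mem R y hr]
        have h2 : (1 : Matrix (Λ → Fin d) (Λ → Fin d) ℂ)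
            (fun r => x (Sum.inr r)) (fun r => y (Sum.inr r)) = 0 :=
          Matrix.one_apply_ne (fun h => hne (congrFun h r))
        rw [h1, h2, zero_mul, mul_zero]
    · push_neg at hacR
      obtain ⟨r, hr, hne⟩ := hacR
      have h1 : (1 : Matrix (Λ → Fin d) (Λ → Fin d) ℂ)
          (fun r => x (sitePerm R (Sum.inr r))) (fun r => y (sitePerm R (Sum.inr r))) = 0 := by
        apply Matrix.one_apply_ne
        intro h
        apply hne
        have := congrFun h r
        rwa [sp_inr_mem R x hr, sp_inr_mem R y hr] at this
      have h2 : X (fun r => x (Sum.inl r)) (fun r => y (Sum.inl r)) = 0 :=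
        hX.1 _ _ ⟨r, hnP r hr, hne⟩
      rw [h1, h2, mul_zero, zero_mul]
  · push_neg at hbd_off
    obtain ⟨r, hr, hne⟩ := hbd_off
    have h1 : (1 : Matrix (Λ → Fin d) (Λ → Fin d) ℂ)
        (fun r => x (sitePerm R (Sum.inr r))) (fun r => y (sitePerm R (Sum.inr r))) = 0 := by
      apply Matrix.one_apply_ne
      intro h
      apply hne
      have := congrFun h r
      rwa [sp_inr_not R x hr, sp_inr_not R y hr] at this
    have h2 : (1 : Matrix (Λ → Fin d) (Λ → Fin d) ℂ)
        (fun r => x (Sum.inr r)) (fun r => y (Sum.inr r)) = 0 :=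
      Matrix.one_apply_ne (fun h => hne (congrFun h r))
    rw [h1, h2, mul_zero, mul_zero]

end SwapEntry
section OmegaConj

variable {d : ℕ} {G : Type} [Group G] {u : G → Matrix (Fin d) (Fin d) ℂ}

/-- Invariance of a flow under conjugation by a self-adjoint `G`-symmetric unitary
supported on `A` (or `Aᶜ`) and on `B` (or `Bᶜ`). -/
lemma omega_conj (Φ : LatticeFlow d G u) (Λ' : Type) [Fintype Λ'] [DecidableEq Λ']
    (A B : Set Λ') (W V : Matrix (Λ' → Fin d) (Λ' → Fin d) ℂ)
    (hW : IsUnitaryMat W) (hWG : IsGSymm u W)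
    (hV : IsUnitaryMat V) (hVG : IsGSymm u V)
    (hVA : SupportedOn A V ∨ SupportedOn Aᶜ V)
    (hVB : SupportedOn B V ∨ SupportedOn Bᶜ V) :
    Φ.omega Λ' A B (V * W * V) = Φ.omega Λ' A B W := by
  rw [mul_assoc, Φ.left_inv Λ' A B (W * V) V (hW.mul hV) (hWG.mul hVG) hV hVG hVA,
    Φ.right_inv Λ' A B W V hW hWG hV hVG hVB]

/-- Invariance of a flow under the swap of the two copies of an `A`- and `B`-compatible
region `R` in the doubled lattice. -/
lemma omega_swap (Φ : LatticeFlow d G u) (Λ : Type) [Fintype Λ] [DecidableEq Λ]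
    (R : Set Λ) (A B : Set (Λ ⊕ Λ))
    (hA : ∀ r ∈ R, (Sum.inl r ∈ A ↔ Sum.inr r ∈ A))
    (hB : ∀ r ∈ R, (Sum.inl r ∈ B ↔ Sum.inr r ∈ B))
    (W : Matrix ((Λ ⊕ Λ) → Fin d) ((Λ ⊕ Λ) → Fin d) ℂ)
    (hW : IsUnitaryMat W) (hWG : IsGSymm u W) :
    Φ.omega (Λ ⊕ Λ) A B
      (W.submatrix (cfgOf (sitePerm R)) (cfgOf (sitePerm R))) = Φ.omega (Λ ⊕ Λ) A B W := by
  classical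
  set RA : Set Λ := {r ∈ R | Sum.inl r ∈ A} with hRA
  set RB : Set Λ := {r ∈ R | Sum.inl r ∈ B} with hRB
  set R1 : Set Λ := RA ∩ RB with hR1
  set R2 : Set Λ := RA \ RB with hR2
  set R3 : Set Λ := RB \ RA with hR3
  set R4 : Set Λ := R \ (RA ∪ RB) with hR4
  -- the four partial swaps
  set S1 := permM (cfgOf (d := d) (sitePerm R1)) with hS1
  set S2 := permM (cfgOf (d := d) (sitePerm R2)) with hS2
  set S3 := permM (cfgOf (d := d) (sitePerm R3)) with hS3
  set S4 := permM (cfgOf (d := d) (sitePerm R4)) with hS4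
  have hRAR : RA ⊆ R := fun r hr => hr.1
  have hRBR : RB ⊆ R := fun r hr => hr.1
  -- supports
  have hsupp : ∀ R' : Set Λ,
      SupportedOn (Sum.inl '' R' ∪ Sum.inr '' R') (permM (cfgOf (d := d) (sitePerm R'))) :=
    fun R' => permM_cfgOf_supported (sitePerm R') _ (sitePerm_fix R')
  have hsub : ∀ (R' : Set Λ) (C : Set (Λ ⊕ Λ)), (∀ r ∈ R', Sum.inl r ∈ C) →
      (∀ r ∈ R', Sum.inr r ∈ C) →
      SupportedOn C (permM (cfgOf (d := d) (sitePerm R'))) := by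
    intro R' C h1 h2
    refine SupportedOn.mono ?_ (hsupp R')
    rintro s (⟨r, hr, rfl⟩ | ⟨r, hr, rfl⟩)
    · exact h1 r hr
    · exact h2 r hr
  -- membership facts
  have hm1A : ∀ r ∈ R1, Sum.inl r ∈ A := fun r hr => hr.1.2
  have hm1B : ∀ r ∈ R1, Sum.inl r ∈ B := fun r hr => hr.2.2
  have hm2A : ∀ r ∈ R2, Sum.inl r ∈ A := fun r hr => hr.1.2
  have hm2B : ∀ r ∈ R2, Sum.inl r ∉ B := fun r hr h => hr.2 ⟨hr.1.1, h⟩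
  have hm3A : ∀ r ∈ R3, Sum.inl r ∉ A := fun r hr h => hr.2 ⟨hr.1.1, h⟩
  have hm3B : ∀ r ∈ R3, Sum.inl r ∈ B := fun r hr => hr.1.2
  have hm4A : ∀ r ∈ R4, Sum.inl r ∉ A := fun r hr h => hr.2 (Or.inl ⟨hr.1, h⟩)
  have hm4B : ∀ r ∈ R4, Sum.inl r ∉ B := fun r hr h => hr.2 (Or.inr ⟨hr.1, h⟩)
  have hsubR : ∀ r, r ∈ R1 ∪ (R2 ∪ (R3 ∪ R4)) → r ∈ R := by
    rintro r (h | h | h | h)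
    exacts [hRAR h.1, hRAR h.1, hRBR h.1, h.1]
  -- supports of the four swaps
  have sA1 : SupportedOn A S1 := hsub R1 A hm1A
    (fun r hr => (hA r (hRAR hr.1)).mp (hm1A r hr))
  have sB1 : SupportedOn B S1 := hsub R1 B hm1B
    (fun r hr => (hB r (hRAR hr.1)).mp (hm1B r hr))
  have sA2 : SupportedOn A S2 := hsub R2 A hm2A
    (fun r hr => (hA r (hRAR hr.1)).mp (hm2A r hr))
  have sB2 : SupportedOn Bᶜ S2 := hsub R2 Bᶜ hm2B
    (fun r hr h => hm2B r hr ((hB r (hRAR hr.1)).mpr h))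
  have sA3 : SupportedOn Aᶜ S3 := hsub R3 Aᶜ hm3A
    (fun r hr h => hm3A r hr ((hA r (hRBR hr.1)).mpr h))
  have sB3 : SupportedOn B S3 := hsub R3 B hm3B
    (fun r hr => (hB r (hRBR hr.1)).mp (hm3B r hr))
  have sA4 : SupportedOn Aᶜ S4 := hsub R4 Aᶜ hm4A
    (fun r hr h => hm4A r hr ((hA r hr.1).mpr h))
  have sB4 : SupportedOn Bᶜ S4 := hsub R4 Bᶜ hm4B
    (fun r hr h => hm4B r hr ((hB r hr.1).mpr h))
  -- unitarity and symmetry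
  have hu : ∀ R' : Set Λ, IsUnitaryMat (permM (cfgOf (d := d) (sitePerm R'))) :=
    fun R' => permM_unitary _
  have hg : ∀ R' : Set Λ, IsGSymm u (permM (cfgOf (d := d) (sitePerm R'))) :=
    fun R' => permM_cfgOf_gsymm _
  -- disjointness
  have hd34 : Disjoint R3 R4 := by
    rw [Set.disjoint_left]; intro r h3 h4; exact h4.2 (Or.inr h3.1)
  have hd234 : Disjoint R2 (R3 ∪ R4) := by
    rw [Set.disjoint_left]; rintro r h2 (h3 | h4)
    · exact h3.2 h2.1
    · exact h4.2 (Or.inl h2.1)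
  have hd1234 : Disjoint R1 (R2 ∪ (R3 ∪ R4)) := by
    rw [Set.disjoint_left]; rintro r h1 (h2 | h3 | h4)
    · exact h2.2 h1.2
    · exact h3.2 h1.1
    · exact h4.2 (Or.inl h1.1)
  -- the decomposition of the full swap
  have hsets : R1 ∪ (R2 ∪ (R3 ∪ R4)) = R := by
    ext r
    constructor
    · exact hsubR r
    · intro hr
      by_cases hA' : r ∈ RA <;> by_cases hB' : r ∈ RB
      · exact Or.inl ⟨hA', hB'⟩
      · exact Or.inr (Or.inl ⟨hA', hB'⟩)
      · exact Or.inr (Or.inr (Or.inl ⟨hB', hA'⟩))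
      · exact Or.inr (Or.inr (Or.inr ⟨hr, fun h => h.elim hA' hB'⟩))
  have hcomp : ∀ s, sitePerm R1 (sitePerm R2 (sitePerm R3 (sitePerm R4 s))) = sitePerm R s := by
    intro s
    rw [sitePerm_comp R3 R4 hd34, sitePerm_comp R2 (R3 ∪ R4) hd234,
      sitePerm_comp R1 (R2 ∪ (R3 ∪ R4)) hd1234, hsets]
  have hcfg : ∀ x : (Λ ⊕ Λ) → Fin d,
      cfgOf (sitePerm R4) (cfgOf (sitePerm R3) (cfgOf (sitePerm R2)
        (cfgOf (d := d) (sitePerm R1) x))) = cfgOf (sitePerm R) x := by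
    intro x
    funext s
    exact congrArg x (hcomp s)
  have hmat : W.submatrix (cfgOf (d := d) (sitePerm R)) (cfgOf (sitePerm R)) =
      S1 * (S2 * (S3 * (S4 * W * S4) * S3) * S2) * S1 := by
    rw [hS4, permM_sandwich _ (cfgOf_sitePerm_symm R4),
      hS3, permM_sandwich _ (cfgOf_sitePerm_symm R3),
      hS2, permM_sandwich _ (cfgOf_sitePerm_symm R2),
      hS1, permM_sandwich _ (cfgOf_sitePerm_symm R1)]
    ext x y
    simp only [Matrix.submatrix_apply]
    rw [hcfg x, hcfg y]
  rw [hmat]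
  have h4u : IsUnitaryMat (S4 * W * S4) := ((hu R4).mul hW).mul (hu R4)
  have h4g : IsGSymm u (S4 * W * S4) := ((hg R4).mul hWG).mul (hg R4)
  have h3u : IsUnitaryMat (S3 * (S4 * W * S4) * S3) := ((hu R3).mul h4u).mul (hu R3)
  have h3g : IsGSymm u (S3 * (S4 * W * S4) * S3) := ((hg R3).mul h4g).mul (hg R3)
  have h2u : IsUnitaryMat (S2 * (S3 * (S4 * W * S4) * S3) * S2) := ((hu R2).mul h3u).mul (hu R2)
  have h2g : IsGSymm u (S2 * (S3 * (S4 * W * S4) * S3) * S2) := ((hg R2).mul h3g).mul (hg R2)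
  rw [omega_conj Φ _ A B _ S1 h2u h2g (hu R1) (hg R1) (Or.inl sA1) (Or.inl sB1)]
  rw [omega_conj Φ _ A B _ S2 h3u h3g (hu R2) (hg R2) (Or.inl sA2) (Or.inr sB2)]
  rw [omega_conj Φ _ A B _ S3 h4u h4g (hu R3) (hg R3) (Or.inr sA3) (Or.inl sB3)]
  rw [omega_conj Φ _ A B _ S4 hW hWG (hu R4) (hg R4) (Or.inr sA4) (Or.inr sB4)]

end OmegaConj
section Key

variable {d : ℕ} {G : Type} [Group G] {u : G → Matrix (Fin d) (Fin d) ℂ}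

lemma mem_inl_union {Λ : Type*} {S T : Set Λ} (r : Λ) :
    Sum.inl r ∈ (Sum.inl '' S ∪ Sum.inr '' T : Set (Λ ⊕ Λ)) ↔ r ∈ S := by simp

lemma mem_inr_union {Λ : Type*} {S T : Set Λ} (r : Λ) :
    Sum.inr r ∈ (Sum.inl '' S ∪ Sum.inr '' T : Set (Λ ⊕ Λ)) ↔ r ∈ T := by simp

/-- Key lemma: the flow does not distinguish `(X·Y) ⊗ 1` from `X ⊗ Y` when `Y` can be
swapped to the second copy. -/
lemma omega_key (Φ : LatticeFlow d G u) (Λ : Type) [Fintype Λ] [DecidableEq Λ]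
    (P R : Set Λ) (hPR : Disjoint P R)
    (X Y : Matrix (Λ → Fin d) (Λ → Fin d) ℂ)
    (hXu : IsUnitaryMat X) (hXG : IsGSymm u X) (hXs : SupportedOn P X)
    (hYu : IsUnitaryMat Y) (hYG : IsGSymm u Y) (hYs : SupportedOn R Y)
    (A B : Set (Λ ⊕ Λ))
    (hA : ∀ r ∈ R, (Sum.inl r ∈ A ↔ Sum.inr r ∈ A))
    (hB : ∀ r ∈ R, (Sum.inl r ∈ B ↔ Sum.inr r ∈ B)) :
    Φ.omega (Λ ⊕ Λ) A B (Kr (X * Y) 1) = Φ.omega (Λ ⊕ Λ) A B (Kr X Y) := by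
  have hsplit : Kr (X * Y) (1 : Matrix (Λ → Fin d) (Λ → Fin d) ℂ) = Kr X 1 * Kr Y 1 := by
    rw [Kr_mul, one_mul]
  have h1 : (Kr (X * Y) (1 : Matrix (Λ → Fin d) (Λ → Fin d) ℂ)).submatrix
      (cfgOf (sitePerm R)) (cfgOf (sitePerm R)) = Kr X Y := by
    rw [hsplit, ← Matrix.submatrix_mul_equiv (Kr X 1) (Kr Y 1) _ (cfgOf (sitePerm R)) _,
      swap_fix hXs hPR, swap_move hYs, Kr_mul, mul_one, one_mul]
  have hWu : IsUnitaryMat (Kr (X * Y) (1 : Matrix (Λ → Fin d) (Λ → Fin d) ℂ)) :=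
    Kr_unitary (hXu.mul hYu) isUnitaryMat_one
  have hWG : IsGSymm u (Kr (X * Y) (1 : Matrix (Λ → Fin d) (Λ → Fin d) ℂ)) :=
    Kr_gsymm (hXG.mul hYG) isGSymm_one
  rw [← h1]
  exact (omega_swap Φ Λ R A B hA hB _ hWu hWG).symm

end Key

/-- Lemma 1 (generalized stacking): for `G`-symmetric unitaries `U₁, U₂` supported on
disjoint subsets `Λ₁, Λ₂` of a lattice `Λ`, and `A₁, B₁ ⊆ Λ₁`, `A₂, B₂ ⊆ Λ₂`,
`Ω_{A₁∪A₂,B₁∪B₂}(U₁·U₂) = Ω_{A₁,B₁}(U₁) + Ω_{A₂,B₂}(U₂)`. -/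
theorem flow_generalized_stacking
    {d : ℕ} (hd : 1 ≤ d) {G : Type} [Group G]
    (u : G → Matrix (Fin d) (Fin d) ℂ)
    (hu_unit : ∀ g, IsUnitaryMat (u g))
    (hu_mul : ∀ g h, u (g * h) = u g * u h)
    (Φ : LatticeFlow d G u)
    (Λ : Type) [Fintype Λ] [DecidableEq Λ]
    (Λ₁ Λ₂ : Set Λ) (hdisj : Disjoint Λ₁ Λ₂)
    (U₁ U₂ : Matrix (Λ → Fin d) (Λ → Fin d) ℂ)
    (hU₁ : IsUnitaryMat U₁) (hU₁G : IsGSymm u U₁) (hU₁s : SupportedOn Λ₁ U₁)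
    (hU₂ : IsUnitaryMat U₂) (hU₂G : IsGSymm u U₂) (hU₂s : SupportedOn Λ₂ U₂)
    (A₁ B₁ A₂ B₂ : Set Λ)
    (hA₁ : A₁ ⊆ Λ₁) (hB₁ : B₁ ⊆ Λ₁) (hA₂ : A₂ ⊆ Λ₂) (hB₂ : B₂ ⊆ Λ₂) :
    Φ.omega Λ (A₁ ∪ A₂) (B₁ ∪ B₂) (U₁ * U₂) =
      Φ.omega Λ A₁ B₁ U₁ + Φ.omega Λ A₂ B₂ U₂ := by
  have hK : ∀ X Y : Matrix (Λ → Fin d) (Λ → Fin d) ℂ,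
      (Matrix.reindex (Equiv.sumArrowEquivProdArrow Λ Λ (Fin d)).symm
        (Equiv.sumArrowEquivProdArrow Λ Λ (Fin d)).symm
        (Matrix.kroneckerMap (· * ·) X Y)) = Kr X Y := fun X Y => rfl
  have hd12 : ∀ r, r ∈ Λ₁ → r ∉ Λ₂ := fun r h h' => Set.disjoint_left.mp hdisj h h'
  -- membership characterizations for the two doubled configurations of regions
  have hAiff : ∀ (C₂ : Set Λ) (R : Set Λ) (C : Set Λ), C ⊆ Λ₁ → C₂ ⊆ R →
      (∀ r ∈ R, r ∉ Λ₁) →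
      ∀ r ∈ R, (Sum.inl r ∈ (Sum.inl '' (C ∪ C₂) ∪ Sum.inr '' C₂ : Set (Λ ⊕ Λ)) ↔
        Sum.inr r ∈ (Sum.inl '' (C ∪ C₂) ∪ Sum.inr '' C₂ : Set (Λ ⊕ Λ))) := by
    intro C₂ R C hC hC₂ hR r hr
    rw [mem_inl_union, mem_inr_union]
    constructor
    · rintro (h | h)
      · exact absurd (hC h) (hR r hr)
      · exact h
    · exact fun h => Or.inr h
  -- Step 1: stack with the identity, with `A₂, B₂` on the ancilla copy
  have s1 := Φ.stacking Λ Λ (A₁ ∪ A₂) (B₁ ∪ B₂) A₂ B₂ (U₁ * U₂) 1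
    (hU₁.mul hU₂) (hU₁G.mul hU₂G) isUnitaryMat_one isGSymm_one
  rw [Φ.norm_one, add_zero, hK] at s1
  -- Step 2: swap `Λ₂` to the ancilla copy
  have k1 := omega_key Φ Λ Λ₁ Λ₂ hdisj U₁ U₂ hU₁ hU₁G hU₁s hU₂ hU₂G hU₂s
    (Sum.inl '' (A₁ ∪ A₂) ∪ Sum.inr '' A₂) (Sum.inl '' (B₁ ∪ B₂) ∪ Sum.inr '' B₂)
    (hAiff A₂ Λ₂ A₁ hA₁ hA₂ (fun r hr h => hd12 r h hr))
    (hAiff B₂ Λ₂ B₁ hB₁ hB₂ (fun r hr h => hd12 r h hr))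
  -- Step 3: unstack
  have s2 := Φ.stacking Λ Λ (A₁ ∪ A₂) (B₁ ∪ B₂) A₂ B₂ U₁ U₂ hU₁ hU₁G hU₂ hU₂G
  rw [hK] at s2
  -- Step 4-6: the same trick shows `Ω_{A₁∪A₂,B₁∪B₂}(U₁) = Ω_{A₁,B₁}(U₁)`
  have s3 := Φ.stacking Λ Λ (A₁ ∪ A₂) (B₁ ∪ B₂) A₁ B₁ U₁ 1
    hU₁ hU₁G isUnitaryMat_one isGSymm_one
  rw [Φ.norm_one, add_zero, hK] at s3
  have hA₂Λ₁ : ∀ r ∈ Λ₁, r ∉ A₂ := fun r hr h => hd12 r hr (hA₂ h)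
  have hB₂Λ₁ : ∀ r ∈ Λ₁, r ∉ B₂ := fun r hr h => hd12 r hr (hB₂ h)
  have hAiff2 : ∀ r ∈ Λ₁, (Sum.inl r ∈ (Sum.inl '' (A₁ ∪ A₂) ∪ Sum.inr '' A₁ : Set (Λ ⊕ Λ)) ↔
      Sum.inr r ∈ (Sum.inl '' (A₁ ∪ A₂) ∪ Sum.inr '' A₁ : Set (Λ ⊕ Λ))) := by
    intro r hr
    rw [mem_inl_union, mem_inr_union]
    constructor
    · rintro (h | h)
      · exact h
      · exact absurd h (hA₂Λ₁ r hr)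
    · exact fun h => Or.inl h
  have hBiff2 : ∀ r ∈ Λ₁, (Sum.inl r ∈ (Sum.inl '' (B₁ ∪ B₂) ∪ Sum.inr '' B₁ : Set (Λ ⊕ Λ)) ↔
      Sum.inr r ∈ (Sum.inl '' (B₁ ∪ B₂) ∪ Sum.inr '' B₁ : Set (Λ ⊕ Λ))) := by
    intro r hr
    rw [mem_inl_union, mem_inr_union]
    constructor
    · rintro (h | h)
      · exact h
      · exact absurd h (hB₂Λ₁ r hr)
    · exact fun h => Or.inl h
  have k2 := omega_key Φ Λ ∅ Λ₁ (by simp) 1 U₁ isUnitaryMat_one isGSymm_one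
    (supportedOn_one ∅) hU₁ hU₁G hU₁s
    (Sum.inl '' (A₁ ∪ A₂) ∪ Sum.inr '' A₁) (Sum.inl '' (B₁ ∪ B₂) ∪ Sum.inr '' B₁)
    hAiff2 hBiff2
  rw [one_mul] at k2
  have s4 := Φ.stacking Λ Λ (A₁ ∪ A₂) (B₁ ∪ B₂) A₁ B₁ 1 U₁
    isUnitaryMat_one isGSymm_one hU₁ hU₁G
  rw [Φ.norm_one, zero_add, hK] at s4
  have e1 : Φ.omega Λ (A₁ ∪ A₂) (B₁ ∪ B₂) U₁ = Φ.omega Λ A₁ B₁ U₁ := by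
    rw [← s3, k2, s4]
  rw [← s1, k1, s2, e1]
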